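/- Let d ≥ 2 and let w₁ ≥ w₂ ≥ ⋯ ≥ w_d = 0 be integers with Weyl dimension ∏_{1 ≤ j < k ≤ d} (w_j − w_k + k − j)/(k − j) = d. Then either (w₁,…,w_d) = (1,0,…,0) or (w₁,…,w_d) = (1,1,…,1,0). -/

import Mathlib

open Finset

def weylDim (d : ℕ) (w : Fin d → ℤ) : ℚ :=
  ∏ j : Fin d, ∏ k : Fin d,
    if j < k then
      ((w j - w k + (k.val : ℤ) - (j.val : ℤ) : ℤ) : ℚ) / (((k.val : ℤ) - (j.val : ℤ) : ℤ) : ℚ)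
    else 1

private lemma telescope (a : ℕ) (ha : 1 ≤ a) : ∀ b, a ≤ b →
    ∏ k ∈ Finset.Ico a b, (((k : ℚ) + 1)/(k : ℚ)) = (b : ℚ) / (a : ℚ) := by
  intro b hb
  induction b, hb using Nat.le_induction with
  | base =>
    have : (a:ℚ) ≠ 0 := by positivity
    simp [div_self this]
  | succ b hb ih =>
    have hb0 : (b:ℚ) ≠ 0 := by
      have : 1 ≤ b := le_trans ha hb
      positivity
    have ha0 : (a:ℚ) ≠ 0 := by positivity
    rw [Finset.prod_Ico_succ_top hb, ih]
    push_cast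
    field_simp

private lemma telescope2 (m : ℕ) (hm : 1 ≤ m) :
    ∏ j ∈ Finset.Ico 1 m, (((m:ℚ) - (j:ℚ) + 1)/((m:ℚ) - (j:ℚ))) = (m:ℚ) := by
  have := telescope 1 le_rfl m hm
  rw [Finset.prod_nbij' (i := fun j => m - j) (j := fun t => m - t)
      (t := Finset.Ico 1 m) (g := fun t => ((t : ℚ) + 1)/(t : ℚ))]
  · rw [this]; simp
  · intro j hj
    simp only [Finset.mem_Ico] at hj ⊢
    omega
  · intro t ht
    simp only [Finset.mem_Ico] at ht ⊢
    omega
  · intro j hj; simp only [Finset.mem_Ico] at hj; omega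
  · intro t ht; simp only [Finset.mem_Ico] at ht; omega
  · intro j hj
    simp only [Finset.mem_Ico] at hj
    have h1 : ((m - j : ℕ) : ℚ) = (m:ℚ) - (j:ℚ) := by
      push_cast [Nat.cast_sub (le_of_lt hj.2)]; ring
    rw [h1]

theorem stmt15 (n : ℕ) (w : Fin (n + 2) → ℤ) (hmono : Antitone w)
    (hlast : w (Fin.last (n + 1)) = 0)
    (hdim : weylDim (n + 2) w = ((n : ℚ) + 2)) :
    (∀ j, w j = if j = 0 then 1 else 0) ∨
    (∀ j, w j = if j = Fin.last (n + 1) then 0 else 1) := by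
  set W : ℕ → ℤ := fun i => if h : i < (n+2) then w ⟨i, h⟩ else 0 with hWdef
  set G : ℕ → ℕ → ℚ := fun j k =>
    if j < k then ((W j : ℚ) - (W k : ℚ) + (k:ℚ) - (j:ℚ))/((k:ℚ) - (j:ℚ)) else 1 with hGdef
  have hprod : weylDim (n+2) w = ∏ p ∈ (Finset.range (n+2)) ×ˢ (Finset.range (n+2)), G p.1 p.2 := by
    rw [Finset.prod_product', weylDim]
    have inner : ∀ j : Fin (n+2), (∏ k : Fin (n+2),
        (if j < k then
          ((w j - w k + (k.val : ℤ) - (j.val : ℤ) : ℤ) : ℚ) / (((k.val : ℤ) - (j.val : ℤ) : ℤ) : ℚ)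
        else 1)) = ∏ k ∈ Finset.range (n+2), G j.val k := by
      intro j
      rw [← Fin.prod_univ_eq_prod_range (fun k => G j.val k) (n+2)]
      refine Finset.prod_congr rfl (fun k _ => ?_)
      simp only [hGdef, Fin.lt_def, hWdef]
      rcases lt_or_ge j.val k.val with h | h
      · rw [if_pos h, if_pos h, dif_pos j.isLt, dif_pos k.isLt]
        push_cast [Fin.eta]
        ring_nf
      · rw [if_neg (not_lt.mpr h), if_neg (not_lt.mpr h)]
    rw [Finset.prod_congr rfl (fun j _ => inner j)]
    exact Fin.prod_univ_eq_prod_range (fun j => ∏ k ∈ Finset.range (n+2), G j k) (n+2)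
  -- basic facts
  have hw0 : ∀ j : Fin (n+2), 0 ≤ w j := fun j => hlast ▸ hmono (Fin.le_last j)
  have hGval : ∀ j k : ℕ, j < k → G j k = ((W j : ℚ) - (W k : ℚ) + (k:ℚ) - (j:ℚ))/((k:ℚ) - (j:ℚ)) := by
    intro j k h; simp only [hGdef, if_pos h]
  have hG1 : ∀ j k : ℕ, j < (n+2) → k < (n+2) → 1 ≤ G j k := by
    intro j k hj hk
    simp only [hGdef]
    split_ifs with h
    · have hjk : (j:ℚ) < k := by exact_mod_cast h
      have hden : (0:ℚ) < (k:ℚ) - j := by linarith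
      rw [le_div_iff₀ hden, one_mul]
      have hw : W k ≤ W j := by
        simp only [hWdef]; rw [dif_pos hj, dif_pos hk]
        exact hmono (Fin.mk_le_mk.mpr h.le)
      have : (W k : ℚ) ≤ (W j : ℚ) := by exact_mod_cast hw
      linarith
    · exact le_refl 1
  have hone : ∀ S : Finset (ℕ × ℕ), S ⊆ (Finset.range (n+2)) ×ˢ (Finset.range (n+2)) →
      (1:ℚ) ≤ ∏ p ∈ S, G p.1 p.2 := by
    intro S hS
    have h := Finset.prod_le_prod (s := S) (f := fun _ => (1:ℚ)) (g := fun p => G p.1 p.2)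
      (fun i _ => zero_le_one) (fun p hp => by
        have hm := hS hp
        rw [Finset.mem_product, Finset.mem_range, Finset.mem_range] at hm
        exact hG1 _ _ hm.1 hm.2)
    simpa using h
  have hsub : ∀ T ⊆ (Finset.range (n+2)) ×ˢ (Finset.range (n+2)),
      ∏ p ∈ T, G p.1 p.2 ≤ weylDim (n+2) w := by
    intro T hT
    rw [hprod, ← Finset.prod_sdiff hT]
    have h1 := hone ((Finset.range (n+2)) ×ˢ (Finset.range (n+2)) \ T) Finset.sdiff_subset
    have h0 : (0:ℚ) ≤ ∏ p ∈ T, G p.1 p.2 := le_trans zero_le_one (hone T hT)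
    exact le_mul_of_one_le_left h0 h1
  by_cases hc0 : w 0 = 0
  · -- all zero, dim = 1, contradiction
    exfalso
    have hz : ∀ j : Fin (n+2), w j = 0 := by
      intro j
      have h1 := hmono (Fin.zero_le j)
      have h2 := hw0 j
      omega
    have hWz : ∀ i, W i = 0 := by
      intro i
      simp only [hWdef]
      split_ifs with h
      · exact hz _
      · rfl
    have : weylDim (n+2) w = 1 := by
      rw [hprod]
      refine Finset.prod_eq_one (fun p hp => ?_)
      simp only [hGdef, hWz]
      rw [Finset.mem_product, Finset.mem_range, Finset.mem_range] at hp
      split_ifs with h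
      · have hjk : (p.1:ℚ) < p.2 := by exact_mod_cast h
        rw [div_eq_one_iff_eq (by linarith)]
        push_cast; ring
      · rfl
    rw [this] at hdim
    have : (0:ℚ) ≤ (n:ℚ) := Nat.cast_nonneg n
    linarith
  · have hc1 : 1 ≤ w 0 := by have := hw0 0; omega
    -- m = number of positive entries
    set m : ℕ := (Finset.univ.filter (fun j : Fin (n+2) => 0 < w j)).card with hmdef
    have hmem : ∀ j : Fin (n+2), 0 < w j ↔ (j : ℕ) < m := by
      intro j
      constructor
      · intro hj
        have hsub2 : Finset.Iic j ⊆ Finset.univ.filter (fun i : Fin (n+2) => 0 < w i) := by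
          intro i hi
          rw [Finset.mem_Iic] at hi
          rw [Finset.mem_filter]
          exact ⟨Finset.mem_univ _, lt_of_lt_of_le hj (hmono hi)⟩
        have := Finset.card_le_card hsub2
        rw [Fin.card_Iic] at this
        omega
      · intro hj
        by_contra hneg
        have hsub2 : Finset.univ.filter (fun i : Fin (n+2) => 0 < w i) ⊆ Finset.Iio j := by
          intro i hi
          rw [Finset.mem_filter] at hi
          rw [Finset.mem_Iio]
          by_contra hij
          have := hmono (not_lt.mp hij)
          omega
        have := Finset.card_le_card hsub2
        rw [Fin.card_Iio] at this
        omega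
    have hm1 : 1 ≤ m := by
      have := (hmem 0).mp (by omega)
      simp at this; omega
    have hmn : m ≤ n + 1 := by
      have := (hmem (Fin.last (n+1))).mpr
      by_contra hcon
      have h2 := this (by simp; omega)
      omega
    have hWpos : ∀ i, i < m → 1 ≤ W i := by
      intro i him
      have hid : i < (n+2) := by omega
      simp only [hWdef]
      rw [dif_pos hid]
      have := (hmem ⟨i, hid⟩).mpr him
      omega
    have hWzero : ∀ i, m ≤ i → i < (n+2) → W i = 0 := by
      intro i him hid
      simp only [hWdef]
      rw [dif_pos hid]
      have h1 := (hmem ⟨i, hid⟩)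
      have h2 := hw0 ⟨i, hid⟩
      simp only [Fin.val_mk] at h1
      omega
    clear_value m
    have hW0 : W 0 = w 0 := by simp only [hWdef]; rw [dif_pos (by omega)]; rfl
    -- the two subproduct pieces
    have hB2 : (m:ℚ) ≤ ∏ j ∈ Finset.Ico 1 m, G j m := by
      rw [← telescope2 m hm1]
      refine Finset.prod_le_prod (fun j hj => ?_) (fun j hj => ?_) <;>
        · rw [Finset.mem_Ico] at hj
          have hjm : (j:ℚ) < m := by exact_mod_cast hj.2
          have hden : (0:ℚ) < (m:ℚ) - j := by linarith
          first
          | positivity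
          | (rw [hGval j m hj.2, hWzero m le_rfl (by omega)]
             have h1 : (1:ℚ) ≤ (W j : ℚ) := by exact_mod_cast hWpos j hj.2
             rw [div_le_div_iff₀ hden hden]
             push_cast
             nlinarith)
    have hrow : ∀ a, m ≤ a → a ≤ (n+2) → ((n:ℚ)+2)/((a:ℕ):ℚ) ≤ ∏ k ∈ Finset.Ico a (n+2), G 0 k := by
      intro a ha had
      have hcast : ((n:ℚ)+2) = (((n+2:ℕ)):ℚ) := by push_cast; ring
      rw [hcast, ← telescope a (by omega) (n+2) had]
      refine Finset.prod_le_prod (fun k hk => ?_) (fun k hk => ?_) <;>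
        · rw [Finset.mem_Ico] at hk
          have hk1 : 1 ≤ k := by omega
          have hkQ : (1:ℚ) ≤ (k:ℚ) := by exact_mod_cast hk1
          first
          | positivity
          | (rw [hGval 0 k (by omega), hWzero k (by omega) hk.2, hW0]
             have h1 : (1:ℚ) ≤ (w 0 : ℚ) := by exact_mod_cast hc1
             rw [div_le_div_iff₀ (by linarith) (by push_cast; linarith)]
             push_cast
             nlinarith)
    -- the union T1 ∪ T2 and its product
    set T1 : Finset (ℕ × ℕ) := (Finset.Ico m (n+2)).image (fun k => (0, k)) with hT1def
    set T2 : Finset (ℕ × ℕ) := (Finset.Ico 1 m).image (fun j => (j, m)) with hT2def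
    have hdisj : Disjoint T1 T2 := by
      rw [Finset.disjoint_left]
      intro p hp1 hp2
      simp only [hT1def, hT2def, Finset.mem_image, Finset.mem_Ico] at hp1 hp2
      obtain ⟨k, hk, rfl⟩ := hp1
      obtain ⟨j, hj, hje⟩ := hp2
      have := congrArg Prod.fst hje
      simp at this
      omega
    have hprodT : ∏ p ∈ T1 ∪ T2, G p.1 p.2 =
        (∏ k ∈ Finset.Ico m (n+2), G 0 k) * (∏ j ∈ Finset.Ico 1 m, G j m) := by
      rw [Finset.prod_union hdisj, hT1def, hT2def,
        Finset.prod_image (by intro x _ y _ h; simpa using h),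
        Finset.prod_image (by intro x _ y _ h; simpa [Prod.ext_iff] using h)]
    have hTsub : T1 ∪ T2 ⊆ (Finset.range (n+2)) ×ˢ (Finset.range (n+2)) := by
      rw [Finset.union_subset_iff]
      constructor <;>
        · intro p hp
          simp only [hT1def, hT2def, Finset.mem_image, Finset.mem_Ico] at hp
          obtain ⟨x, hx, rfl⟩ := hp
          rw [Finset.mem_product, Finset.mem_range, Finset.mem_range]
          constructor <;> omega
    by_cases hc2 : 2 ≤ w 0
    · -- contradiction: dim ≥ (n+2)(m+2)/(m+1) > (n+2)
      exfalso
      have hrowstrong : ((m:ℚ)+2)/(m:ℚ) * (((n+2):ℚ)/((m:ℚ)+1)) ≤ ∏ k ∈ Finset.Ico m (n+2), G 0 k := by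
        rw [Finset.prod_eq_prod_Ico_succ_bot (show m < (n+2) by omega)]
        have hmQ : (1:ℚ) ≤ (m:ℚ) := by exact_mod_cast hm1
        have h1 : ((m:ℚ)+2)/(m:ℚ) ≤ G 0 m := by
          rw [hGval 0 m (by omega), hWzero m le_rfl (by omega), hW0]
          have h2 : (2:ℚ) ≤ (w 0 : ℚ) := by exact_mod_cast hc2
          rw [div_le_div_iff₀ (by linarith) (by push_cast; linarith)]
          push_cast
          nlinarith
        have h2 : (((n+2):ℚ)/((m:ℚ)+1)) ≤ ∏ k ∈ Finset.Ico (m+1) (n+2), G 0 k := by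
          have h := hrow (m+1) (by omega) (by omega)
          push_cast at h ⊢
          exact h
        have hpos1 : (0:ℚ) ≤ ((m:ℚ)+2)/(m:ℚ) := by positivity
        have hpos2 : (0:ℚ) ≤ ((n+2):ℚ)/((m:ℚ)+1) := by positivity
        exact mul_le_mul h1 h2 hpos2 (le_trans hpos1 h1)
      have hchain : ((m:ℚ)+2)/(m:ℚ) * (((n+2):ℚ)/((m:ℚ)+1)) * (m:ℚ) ≤ ((n+2):ℚ) := by
        calc ((m:ℚ)+2)/(m:ℚ) * (((n+2):ℚ)/((m:ℚ)+1)) * (m:ℚ)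
            ≤ (∏ k ∈ Finset.Ico m (n+2), G 0 k) * (∏ j ∈ Finset.Ico 1 m, G j m) := by
              refine mul_le_mul hrowstrong hB2 (by positivity) ?_
              refine le_trans ?_ hrowstrong
              positivity
          _ = ∏ p ∈ T1 ∪ T2, G p.1 p.2 := hprodT.symm
          _ ≤ weylDim (n+2) w := hsub _ hTsub
          _ = ((n+2):ℚ) := by rw [hdim]
      have hmQ : (1:ℚ) ≤ (m:ℚ) := by exact_mod_cast hm1
      have hdQ : (2:ℚ) ≤ ((n+2):ℚ) := by exact_mod_cast (show 2 ≤ (n+2) by omega)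
      have heq : ((m:ℚ)+2)/(m:ℚ) * (((n+2):ℚ)/((m:ℚ)+1)) * (m:ℚ)
          = ((m:ℚ)+2) * ((n+2):ℚ) / ((m:ℚ)+1) := by
        field_simp
        try ring
      rw [heq, div_le_iff₀ (by linarith)] at hchain
      nlinarith
    · -- w 0 = 1
      have hc1' : w 0 = 1 := by omega
      by_cases hm1' : m = 1
      · left
        intro j
        by_cases hj : j = 0
        · rw [if_pos hj, hj, hc1']
        · rw [if_neg hj]
          have hjv : 1 ≤ (j:ℕ) := by
            rcases Nat.eq_zero_or_pos (j:ℕ) with h | h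
            · exact absurd (Fin.ext h : j = 0) hj
            · exact h
          have h2 := hw0 j
          by_contra hne
          have h4 := (hmem j).mp (by omega)
          omega
      · by_cases hmn' : m = n + 1
        · right
          intro j
          by_cases hj : j = Fin.last (n+1)
          · rw [if_pos hj, hj, hlast]
          · rw [if_neg hj]
            have hjv : (j:ℕ) < n + 1 := Fin.val_lt_last hj
            have h1 := (hmem j).mp
            have h2 := hmono (Fin.zero_le j)
            have h3 := (hmem j).mpr (by omega)
            omega
        · -- 2 ≤ m ≤ n : contradiction
          exfalso
          have hm2 : 2 ≤ m := by omega
          have hmn2 : m ≤ n := by omega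
          have hnotmem : (1, m+1) ∉ T1 ∪ T2 := by
            rw [Finset.mem_union]
            rintro (h | h) <;>
              · simp only [hT1def, hT2def, Finset.mem_image, Finset.mem_Ico, Prod.mk.injEq] at h
                obtain ⟨x, hx, h1, h2⟩ := h
                omega
          have hextra : ((m:ℚ)+1)/(m:ℚ) ≤ G 1 (m+1) := by
            rw [hGval 1 (m+1) (by omega), hWzero (m+1) (by omega) (by omega)]
            have h1 : (1:ℚ) ≤ (W 1 : ℚ) := by exact_mod_cast hWpos 1 (by omega)
            have hmQ : (1:ℚ) ≤ (m:ℚ) := by exact_mod_cast hm1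
            rw [div_le_div_iff₀ (by linarith) (by push_cast; linarith)]
            push_cast
            nlinarith
          have hT3sub : insert (1, m+1) (T1 ∪ T2) ⊆ (Finset.range (n+2)) ×ˢ (Finset.range (n+2)) := by
            rw [Finset.insert_subset_iff]
            refine ⟨?_, hTsub⟩
            rw [Finset.mem_product, Finset.mem_range, Finset.mem_range]
            constructor <;> omega
          have hchain : ((m:ℚ)+1)/(m:ℚ) * ((((n+2):ℚ)/(m:ℚ)) * (m:ℚ)) ≤ ((n+2):ℚ) := by
            have hmQ : (1:ℚ) ≤ (m:ℚ) := by exact_mod_cast hm1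
            calc ((m:ℚ)+1)/(m:ℚ) * ((((n+2):ℚ)/(m:ℚ)) * (m:ℚ))
                ≤ G 1 (m+1) * ((∏ k ∈ Finset.Ico m (n+2), G 0 k) * (∏ j ∈ Finset.Ico 1 m, G j m)) := by
                  refine mul_le_mul hextra ?_ (by positivity) ?_
                  · refine mul_le_mul (hrow m le_rfl (by omega)) hB2 (by positivity) ?_
                    refine le_trans ?_ (hrow m le_rfl (by omega))
                    positivity
                  · refine le_trans ?_ hextra
                    positivity
              _ = ∏ p ∈ insert (1, m+1) (T1 ∪ T2), G p.1 p.2 := by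
                  rw [Finset.prod_insert hnotmem, hprodT]
              _ ≤ weylDim (n+2) w := hsub _ hT3sub
              _ = ((n+2):ℚ) := by rw [hdim]
          have hmQ : (1:ℚ) ≤ (m:ℚ) := by exact_mod_cast hm1
          have hdQ : (2:ℚ) ≤ ((n+2):ℚ) := by exact_mod_cast (show 2 ≤ (n+2) by omega)
          have heq : ((m:ℚ)+1)/(m:ℚ) * ((((n+2):ℚ)/(m:ℚ)) * (m:ℚ))
              = ((m:ℚ)+1) * ((n+2):ℚ) / (m:ℚ) := by
            field_simp
            try ring
          rw [heq, div_le_iff₀ (by linarith)] at hchain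
          nlinarith
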